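/- There exists a chore division instance with 3 agents, 11 chores, and binary supermodular cost functions (c_1(S)=|S|, c_2(S)=c_3(S)=max{0,|S|-3}) in which no allocation is both Lorenz dominating and MMS-fair, and no allocation is both Lorenz dominating and EF1. In particular, every Lorenz dominating allocation has sorted cost profile (2,2,1), while every MMS-fair allocation gives agent 1 cost at least 3. -/

import Mathlib

/-- `A` is a complete allocation (partition) of the chores among the agents. -/
def IsPartition {n m : ℕ} (A : Fin n → Finset (Fin m)) : Prop :=
  (∀ i j : Fin n, i ≠ j → Disjoint (A i) (A j)) ∧
    Finset.univ.biUnion A = (Finset.univ : Finset (Fin m))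

/-- Binary marginals for a nonnegative-integer-valued cost function. -/
def BinaryMarginals {m : ℕ} (c : Finset (Fin m) → ℕ) : Prop :=
  ∀ (S : Finset (Fin m)) (a : Fin m), a ∉ S →
    c (insert a S) = c S ∨ c (insert a S) = c S + 1

/-- Supermodularity (increasing marginals), in addition form. -/
def Supermod {m : ℕ} (c : Finset (Fin m) → ℕ) : Prop :=
  ∀ (S T : Finset (Fin m)) (a : Fin m), S ⊆ T → a ∉ T →
    c (insert a S) + c T ≤ c (insert a T) + c S

/-- Sum of the `k` largest entries of the cost profile `p`. -/
def topSum {n : ℕ} (p : Fin n → ℕ) (k : ℕ) : ℕ :=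
  (Finset.univ.powersetCard k).sup fun S => ∑ i ∈ S, p i

/-- `A` Lorenz dominates `B`: every prefix sum of the nonincreasing sorted cost profile
of `A` is at most the corresponding prefix sum for `B`. -/
def LorenzDominates {n m : ℕ} (c : Fin n → Finset (Fin m) → ℕ)
    (A B : Fin n → Finset (Fin m)) : Prop :=
  ∀ k : ℕ, topSum (fun i => c i (A i)) k ≤ topSum (fun i => c i (B i)) k

/-- `A` is EF1: envy vanishes upon removal of some chore from one's own bundle. -/
def EF1 {n m : ℕ} (c : Fin n → Finset (Fin m) → ℕ) (A : Fin n → Finset (Fin m)) : Prop :=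
  ∀ i j : Fin n, A i ≠ ∅ → ∃ t ∈ A i, c i ((A i).erase t) ≤ c i (A j)

/-- The costs of the counterexample instance: agent 1 has `c S = |S|`, and agents 2 and 3
have `c S = max {0, |S| - 3}` (truncated subtraction). -/
def exCost : Fin 3 → Finset (Fin 11) → ℕ :=
  fun i S => if i = 0 then S.card else S.card - 3

/-- in the instance with 3 agents and 11 chores where
`c₁ S = |S|` and `c₂ S = c₃ S = max {0, |S| - 3}` (binary supermodular costs),
no allocation is both Lorenz dominating and MMS-fair, no allocation is both Lorenz
dominating and EF1, every Lorenz dominating allocation has sorted cost profile `(2,2,1)`,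
and every MMS-fair allocation gives agent 1 cost at least `3`. -/
def exB : Fin 3 → Finset (Fin 11) := ![{0}, {1,2,3,4,5}, {6,7,8,9,10}]
def exM : Fin 3 → Finset (Fin 11) := ![{0,1,2,3}, {4,5,6,7}, {8,9,10}]

lemma exB_part : IsPartition exB := by unfold IsPartition; decide
lemma exM_part : IsPartition exM := by unfold IsPartition; decide
lemma exB_top1 : topSum (fun i => exCost i (exB i)) 1 = 2 := by decide
lemma exB_top2 : topSum (fun i => exCost i (exB i)) 2 = 4 := by decide

lemma single_le_topSum (p : Fin 3 → ℕ) (i : Fin 3) : p i ≤ topSum p 1 := by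
  have h : ({i} : Finset (Fin 3)) ∈ Finset.univ.powersetCard 1 := by
    simp [Finset.mem_powersetCard_univ]
  simpa [topSum] using Finset.le_sup (f := fun S => ∑ j ∈ S, p j) h

lemma pair_le_topSum (p : Fin 3 → ℕ) (i j : Fin 3) (hij : i ≠ j) :
    p i + p j ≤ topSum p 2 := by
  have h : ({i, j} : Finset (Fin 3)) ∈ Finset.univ.powersetCard 2 := by
    simp [Finset.mem_powersetCard_univ, Finset.card_insert_of_notMem, hij]
  have := Finset.le_sup (f := fun S => ∑ k ∈ S, p k) h
  simpa [Finset.sum_pair hij, topSum] using this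

lemma part_card_sum {A : Fin 3 → Finset (Fin 11)} (hA : IsPartition A) :
    (A 0).card + (A 1).card + (A 2).card = 11 := by
  have h := congrArg Finset.card hA.2
  rw [Finset.card_biUnion (fun i _ j _ hij => hA.1 i j hij)] at h
  simpa [Fin.sum_univ_three] using h

lemma tau_le_one (τ : Fin 3 → ℕ)
    (hτ : ∀ i, IsLeast {t : ℕ | ∃ X : Fin 3 → Finset (Fin 11), IsPartition X ∧
        IsGreatest (Set.range fun j => exCost i (X j)) t} (τ i))
    (i : Fin 3) (hi : i ≠ 0) : τ i ≤ 1 := by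
  apply (hτ i).2
  refine ⟨exM, exM_part, ?_, ?_⟩
  · exact ⟨0, by fin_cases i <;> first | exact absurd rfl hi | decide⟩
  · rintro x ⟨j, rfl⟩
    fin_cases i <;> first | exact absurd rfl hi | (fin_cases j <;> decide)

/-- Cost facts: -/
lemma exCost0 (S : Finset (Fin 11)) : exCost 0 S = S.card := rfl
lemma exCost1 (S : Finset (Fin 11)) : exCost 1 S = S.card - 3 := rfl
lemma exCost2 (S : Finset (Fin 11)) : exCost 2 S = S.card - 3 := rfl

/-- Key structural fact for Lorenz dominating allocations. -/
lemma lorenz_struct {A : Fin 3 → Finset (Fin 11)} (hA : IsPartition A)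
    (hL : ∀ B, IsPartition B → LorenzDominates exCost A B) :
    ((A 0).card = 1 ∧ (A 1).card = 5 ∧ (A 2).card = 5) ∨
    ((A 0).card = 2 ∧ (A 1).card = 5 ∧ (A 2).card = 4) ∨
    ((A 0).card = 2 ∧ (A 1).card = 4 ∧ (A 2).card = 5) := by
  have hsum := part_card_sum hA
  have hLB := hL exB exB_part
  have h1 : topSum (fun i => exCost i (A i)) 1 ≤ 2 := by
    have := hLB 1; rwa [exB_top1] at this
  have h2 : topSum (fun i => exCost i (A i)) 2 ≤ 4 := by
    have := hLB 2; rwa [exB_top2] at this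
  have s0 := le_trans (single_le_topSum (fun i => exCost i (A i)) 0) h1
  have s1 := le_trans (single_le_topSum (fun i => exCost i (A i)) 1) h1
  have s2 := le_trans (single_le_topSum (fun i => exCost i (A i)) 2) h1
  have p01 := le_trans (pair_le_topSum (fun i => exCost i (A i)) 0 1 (by decide)) h2
  have p02 := le_trans (pair_le_topSum (fun i => exCost i (A i)) 0 2 (by decide)) h2
  have p12 := le_trans (pair_le_topSum (fun i => exCost i (A i)) 1 2 (by decide)) h2
  simp only [exCost0, exCost1, exCost2] at s0 s1 s2 p01 p02 p12
  omega

theorem lorenz_mms_ef1_incomparable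
    (τ : Fin 3 → ℕ)
    (hτ : ∀ i, IsLeast {t : ℕ | ∃ X : Fin 3 → Finset (Fin 11), IsPartition X ∧
        IsGreatest (Set.range fun j => exCost i (X j)) t} (τ i)) :
    (∀ i, BinaryMarginals (exCost i) ∧ Supermod (exCost i) ∧ exCost i ∅ = 0) ∧
    (∀ A : Fin 3 → Finset (Fin 11), IsPartition A →
      (∀ B, IsPartition B → LorenzDominates exCost A B) →
      ¬ (∀ i, exCost i (A i) ≤ τ i)) ∧
    (∀ A : Fin 3 → Finset (Fin 11), IsPartition A →
      (∀ B, IsPartition B → LorenzDominates exCost A B) →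
      ¬ EF1 exCost A) ∧
    (∀ A : Fin 3 → Finset (Fin 11), IsPartition A →
      (∀ B, IsPartition B → LorenzDominates exCost A B) →
      (Multiset.map (fun i => exCost i (A i)) (Finset.univ.val : Multiset (Fin 3))) =
        {2, 2, 1}) ∧
    (∀ A : Fin 3 → Finset (Fin 11), IsPartition A →
      (∀ i, exCost i (A i) ≤ τ i) → 3 ≤ exCost 0 (A 0)) := by
  have mms_fact : ∀ A : Fin 3 → Finset (Fin 11), IsPartition A →
      (∀ i, exCost i (A i) ≤ τ i) → 3 ≤ exCost 0 (A 0) := by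
    intro A hA hM
    have t1 : exCost 1 (A 1) ≤ 1 := le_trans (hM 1) (tau_le_one τ hτ 1 (by decide))
    have t2 : exCost 2 (A 2) ≤ 1 := le_trans (hM 2) (tau_le_one τ hτ 2 (by decide))
    have hsum := part_card_sum hA
    rw [exCost1] at t1; rw [exCost2] at t2; rw [exCost0]
    omega
  refine ⟨?_, ?_, ?_, ?_, mms_fact⟩
  · -- binary marginals and supermodularity
    intro i
    have hc : (exCost i = fun S => S.card) ∨ (exCost i = fun S => S.card - 3) := by
      by_cases hi : i = 0
      · left; subst hi; rfl
      · right; funext S; simp [exCost, hi]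
    refine ⟨?_, ?_, ?_⟩
    · intro S a ha
      have h := Finset.card_insert_of_notMem ha
      rcases hc with hc | hc <;> simp only [hc, h] <;> first | omega | (right; trivial)
    · intro S T a hST haT
      have haS : a ∉ S := fun h => haT (hST h)
      have h1 := Finset.card_insert_of_notMem haS
      have h2 := Finset.card_insert_of_notMem haT
      have h3 := Finset.card_le_card hST
      rcases hc with hc | hc <;> simp only [hc, h1, h2] <;> omega
    · rcases hc with hc | hc <;> rw [hc] <;> simp
  · -- Lorenz vs MMS
    intro A hA hL hM
    have h3 := mms_fact A hA hM
    rcases lorenz_struct hA hL with ⟨h, _, _⟩ | ⟨h, _, _⟩ | ⟨h, _, _⟩ <;>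
      rw [exCost0, h] at h3 <;> omega
  · -- Lorenz vs EF1
    intro A hA hL hE
    rcases lorenz_struct hA hL with ⟨h0, h1, h2⟩ | ⟨h0, h1, h2⟩ | ⟨h0, h1, h2⟩
    · obtain ⟨t, ht, hle⟩ := hE 1 0 (by
        intro h; rw [h] at h1; simp at h1)
      rw [exCost1, exCost1, Finset.card_erase_of_mem ht, h0, h1] at hle
      omega
    · obtain ⟨t, ht, hle⟩ := hE 1 0 (by
        intro h; rw [h] at h1; simp at h1)
      rw [exCost1, exCost1, Finset.card_erase_of_mem ht, h0, h1] at hle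
      omega
    · obtain ⟨t, ht, hle⟩ := hE 2 0 (by
        intro h; rw [h] at h2; simp at h2)
      rw [exCost2, exCost2, Finset.card_erase_of_mem ht, h0, h2] at hle
      omega
  · -- profile is {2,2,1}
    intro A hA hL
    have huniv : (Finset.univ.val : Multiset (Fin 3)) = {0, 1, 2} := by decide
    rw [huniv]
    have : Multiset.map (fun i => exCost i (A i)) ({0, 1, 2} : Multiset (Fin 3)) =
        {exCost 0 (A 0), exCost 1 (A 1), exCost 2 (A 2)} := rfl
    rw [this, exCost0, exCost1, exCost2]
    rcases lorenz_struct hA hL with ⟨h0, h1, h2⟩ | ⟨h0, h1, h2⟩ | ⟨h0, h1, h2⟩ <;>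
      rw [h0, h1, h2] <;> decide
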